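/- Let B be an n×n ASM and z_n = (n, n−1, …, 1). Then the vector w = B·z_n is majorized by z_n: for every k ≤ n, the sum of the k largest components of w is at most n + (n−1) + … + (n−k+1), with equality of total sums. Consequently, every row and column of the ASHM-Latin square L(A) of an n×n×n ASHM A is majorized by (n, n−1, …, 1). -/

import Mathlib

open Finset

/-- A line (vector) of integers is "alternating" in the ASM sense:
all prefix sums are 0 or 1, and the total sum is 1. This is equivalent to the
nonzero entries being ±1, alternating in sign, beginning and ending with +1. -/
def AltLine {n : ℕ} (v : Fin n → ℤ) : Prop :=
  (∀ t : Fin n, (∑ s ∈ Finset.univ.filter (fun s => s ≤ t), v s) = 0 ∨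
      (∑ s ∈ Finset.univ.filter (fun s => s ≤ t), v s) = 1) ∧
  (∑ s, v s) = 1

/-- Alternating sign matrix. -/
def IsAsm {n : ℕ} (A : Matrix (Fin n) (Fin n) ℤ) : Prop :=
  (∀ i, AltLine (fun j => A i j)) ∧ (∀ j, AltLine (fun i => A i j))

/-- Alternating sign hypermatrix: every line in each of the three directions alternates. -/
def IsAshm {n : ℕ} (A : Fin n → Fin n → Fin n → ℤ) : Prop :=
  (∀ j k, AltLine (fun i => A i j k)) ∧
  (∀ i k, AltLine (fun j => A i j k)) ∧
  (∀ i j, AltLine (fun k => A i j k))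

/-- The ASHM-Latin square `L(A) = 1·A₁ + 2·A₂ + ⋯ + n·Aₙ` (planes indexed from 1). -/
def Lmat {n : ℕ} (A : Fin n → Fin n → Fin n → ℤ) (i j : Fin n) : ℤ :=
  ∑ k : Fin n, ((k.1 : ℤ) + 1) * A i j k

lemma altLine_rev {n : ℕ} {v : Fin n → ℤ} (hv : AltLine v) :
    AltLine (fun s => v s.rev) := by
  obtain ⟨h1, h2⟩ := hv
  have hrev : ∀ (w : Fin n → ℤ), ∑ s : Fin n, w (Fin.rev s) = ∑ s, w s := fun w =>
    Fintype.sum_bijective Fin.rev (Fin.rev_involutive.bijective) _ _ (fun _ => rfl)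
  constructor
  · intro t
    have himg : (univ.filter (fun s => s ≤ t)).image Fin.rev
        = univ.filter (fun s => t.rev ≤ s) := by
      ext s
      simp only [mem_image, mem_filter, mem_univ, true_and]
      constructor
      · rintro ⟨a, ha, rfl⟩; exact Fin.rev_le_rev.mpr ha
      · intro hs; exact ⟨s.rev, by rw [← Fin.rev_le_rev, Fin.rev_rev]; exact hs, Fin.rev_rev s⟩
    have e1 : ∑ s ∈ univ.filter (fun s => s ≤ t), v s.rev
        = ∑ s ∈ univ.filter (fun s => t.rev ≤ s), v s := by
      rw [← himg, Finset.sum_image (fun a _ b _ h => Fin.rev_injective h)]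
    rw [e1]
    have hsplit : ∑ s ∈ univ.filter (fun s => t.rev ≤ s), v s
        = (∑ s, v s) - ∑ s ∈ univ.filter (fun s => s < t.rev), v s := by
      rw [eq_sub_iff_add_eq, ← Finset.sum_union]
      · congr 1
        ext s
        simp only [mem_union, mem_filter, mem_univ, true_and]
        constructor
        · intro _; trivial
        · intro _; exact le_or_gt t.rev s
      · rw [Finset.disjoint_filter]
        intro s _ hs; exact not_lt.mpr hs
    rw [hsplit, h2]
    rcases Nat.eq_zero_or_pos t.rev.1 with h0 | hpos
    · have : univ.filter (fun s : Fin n => s < t.rev) = ∅ := by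
        ext s
        simp only [mem_filter, mem_univ, true_and, Fin.lt_def, notMem_empty, iff_false]
        omega
      rw [this]; simp
    · have hn : t.rev.1 - 1 < n := lt_of_le_of_lt (Nat.pred_le _) t.rev.2
      set u : Fin n := ⟨t.rev.1 - 1, hn⟩
      have : univ.filter (fun s : Fin n => s < t.rev) = univ.filter (fun s => s ≤ u) := by
        ext s
        simp only [mem_filter, mem_univ, true_and, Fin.lt_def, Fin.le_def]
        have hu : u.1 = t.rev.1 - 1 := rfl
        omega
      rw [this]
      rcases h1 u with h | h <;> rw [h] <;> simp
  · rw [hrev]; exact h2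


lemma filter_le_eq_Iic {n : ℕ} (t : Fin n) : univ.filter (fun s => s ≤ t) = Iic t := by
  ext s; simp

lemma minsum {n s : ℕ} (hs : s ≤ n) :
    ∑ k : Fin n, min (s : ℤ) ((k.1 : ℤ) + 1) = ∑ t ∈ Finset.range s, ((n - t : ℕ) : ℤ) := by
  have h1 : ∀ k : Fin n, min (s : ℤ) ((k.1 : ℤ) + 1)
      = ∑ t ∈ Finset.range s, (if t ≤ k.1 then (1:ℤ) else 0) := by
    intro k
    rw [← Finset.sum_filter]
    have : (Finset.range s).filter (fun t => t ≤ k.1) = Finset.range (min s (k.1 + 1)) := by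
      ext t; simp only [mem_filter, mem_range, lt_min_iff]; omega
    rw [this]
    simp [Nat.cast_min]
  simp_rw [h1]
  rw [Finset.sum_comm]
  apply Finset.sum_congr rfl
  intro t ht
  rw [mem_range] at ht
  have htn : t < n := lt_of_lt_of_le ht hs
  rw [← Finset.sum_filter]
  have : (univ : Finset (Fin n)).filter (fun k => t ≤ k.1) = Ici (⟨t, htn⟩ : Fin n) := by
    ext k; simp [Fin.le_def]
  rw [this]
  simp [Fin.card_Ici]

lemma core_le {n : ℕ} (B : Matrix (Fin n) (Fin n) ℤ) (hB : IsAsm B) (S : Finset (Fin n)) :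
    (∑ i ∈ S, ∑ j : Fin n, B i j * ((n - j.1 : ℕ) : ℤ))
      ≤ ∑ t ∈ Finset.range S.card, ((n - t : ℕ) : ℤ) := by
  have hrow : ∀ i, ∑ j : Fin n, B i j * ((n - j.1 : ℕ) : ℤ)
      = ∑ k : Fin n, ∑ j ∈ Iic k, B i j := by
    intro i
    rw [Finset.sum_comm' (s := univ) (t := fun k => Iic k) (t' := univ)
      (s' := fun j => Ici j)]
    · apply Finset.sum_congr rfl
      intro j _
      rw [Finset.sum_const]
      have : (Ici j).card = n - j.1 := Fin.card_Ici j
      rw [this]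
      ring
    · intro k j; simp [mem_Iic, mem_Ici]
  have hP01 : ∀ i k, (∑ j ∈ Iic k, B i j) = 0 ∨ (∑ j ∈ Iic k, B i j) = 1 := by
    intro i k
    have := (hB.1 i).1 k
    rwa [filter_le_eq_Iic] at this
  have hcol : ∀ k : Fin n, ∑ i : Fin n, ∑ j ∈ Iic k, B i j = (k.1 : ℤ) + 1 := by
    intro k
    refine Finset.sum_comm.trans ?_
    have : ∀ j, ∑ i : Fin n, B i j = 1 := fun j => (hB.2 j).2
    simp_rw [this]
    rw [Finset.sum_const, Fin.card_Iic]
    simp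
  calc ∑ i ∈ S, ∑ j : Fin n, B i j * ((n - j.1 : ℕ) : ℤ)
      = ∑ i ∈ S, ∑ k : Fin n, ∑ j ∈ Iic k, B i j := by
        exact Finset.sum_congr rfl (fun i _ => hrow i)
    _ = ∑ k : Fin n, ∑ i ∈ S, ∑ j ∈ Iic k, B i j := Finset.sum_comm
    _ ≤ ∑ k : Fin n, min (S.card : ℤ) ((k.1 : ℤ) + 1) := by
        apply Finset.sum_le_sum
        intro k _
        refine le_min ?_ ?_
        · have h1 : ∑ i ∈ S, ∑ j ∈ Iic k, B i j ≤ ∑ i ∈ S, (1:ℤ) :=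
            Finset.sum_le_sum (fun i _ => by rcases hP01 i k with h | h <;> omega)
          simpa using h1
        · have h2 : ∑ i ∈ S, ∑ j ∈ Iic k, B i j ≤ ∑ i : Fin n, ∑ j ∈ Iic k, B i j := by
            apply Finset.sum_le_sum_of_subset_of_nonneg (Finset.subset_univ S)
            intro i _ _
            rcases hP01 i k with h | h <;> omega
          rw [hcol k] at h2
          exact h2
    _ = ∑ t ∈ Finset.range S.card, ((n - t : ℕ) : ℤ) := by
        apply minsum
        simpa using Finset.card_le_card (Finset.subset_univ S)

lemma core_eq {n : ℕ} (B : Matrix (Fin n) (Fin n) ℤ) (hB : IsAsm B) :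
    (∑ i : Fin n, ∑ j : Fin n, B i j * ((n - j.1 : ℕ) : ℤ))
      = ∑ t ∈ Finset.range n, ((n - t : ℕ) : ℤ) := by
  rw [Finset.sum_comm]
  have : ∀ j : Fin n, ∑ i : Fin n, B i j * ((n - j.1 : ℕ) : ℤ)
      = ((n - j.1 : ℕ) : ℤ) := by
    intro j
    rw [← Finset.sum_mul, (hB.2 j).2, one_mul]
  simp_rw [this]
  rw [Fin.sum_univ_eq_sum_range (fun t => ((n - t : ℕ) : ℤ))]

lemma lmat_as_core {n : ℕ} (C : Matrix (Fin n) (Fin n) ℤ) (f : Fin n → Fin n → ℤ)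
    (hCf : ∀ j k, C j k = f j (Fin.rev k)) (j : Fin n) :
    ∑ k : Fin n, C j k * ((n - k.1 : ℕ) : ℤ) = ∑ k : Fin n, ((k.1 : ℤ) + 1) * f j k := by
  have := Fintype.sum_bijective Fin.rev (Fin.rev_involutive.bijective)
    (fun k : Fin n => C j k * ((n - k.1 : ℕ) : ℤ))
    (fun k : Fin n => ((k.1 : ℤ) + 1) * f j k) ?_
  · exact this
  · intro k
    show C j k * ((n - k.1 : ℕ) : ℤ) = ((k.rev.1 : ℤ) + 1) * f j k.rev
    rw [hCf j k]
    have hval : ((Fin.rev k).1 : ℤ) + 1 = ((n - k.1 : ℕ) : ℤ) := by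
      have h2 : k.1 + 1 ≤ n := k.2
      simp only [Fin.val_rev]
      rw [Nat.cast_sub h2, Nat.cast_sub (Nat.le_of_lt k.2)]
      push_cast
      ring
    rw [← hval]
    ring

theorem stmt7 {n : ℕ} (B : Matrix (Fin n) (Fin n) ℤ) (hB : IsAsm B)
    (A : Fin n → Fin n → Fin n → ℤ) (hA : IsAshm A) :
    (∀ S : Finset (Fin n),
        (∑ i ∈ S, ∑ j : Fin n, B i j * ((n - j.1 : ℕ) : ℤ))
          ≤ ∑ t ∈ Finset.range S.card, ((n - t : ℕ) : ℤ)) ∧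
    ((∑ i : Fin n, ∑ j : Fin n, B i j * ((n - j.1 : ℕ) : ℤ))
        = ∑ t ∈ Finset.range n, ((n - t : ℕ) : ℤ)) ∧
    (∀ i : Fin n, ∀ S : Finset (Fin n),
        (∑ j ∈ S, Lmat A i j) ≤ ∑ t ∈ Finset.range S.card, ((n - t : ℕ) : ℤ)) ∧
    (∀ i : Fin n, (∑ j : Fin n, Lmat A i j) = ∑ t ∈ Finset.range n, ((n - t : ℕ) : ℤ)) ∧
    (∀ j : Fin n, ∀ S : Finset (Fin n),
        (∑ i ∈ S, Lmat A i j) ≤ ∑ t ∈ Finset.range S.card, ((n - t : ℕ) : ℤ)) ∧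
    (∀ j : Fin n, (∑ i : Fin n, Lmat A i j) = ∑ t ∈ Finset.range n, ((n - t : ℕ) : ℤ)) := by
  -- the row matrices: for fixed i, C i is an ASM with L-row i as weighted sums
  have rowAsm : ∀ i : Fin n,
      IsAsm (Matrix.of (fun j k : Fin n => A i j (Fin.rev k))) := by
    intro i
    constructor
    · intro j; exact altLine_rev (hA.2.2 i j)
    · intro k; exact hA.2.1 i k.rev
  have rowL : ∀ i j : Fin n,
      Lmat A i j = ∑ k : Fin n, (Matrix.of (fun j k : Fin n => A i j (Fin.rev k))) j k
        * ((n - k.1 : ℕ) : ℤ) := by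
    intro i j
    exact (lmat_as_core (Matrix.of (fun j k : Fin n => A i j (Fin.rev k)))
      (fun j k => A i j k) (fun _ _ => rfl) j).symm
  have colAsm : ∀ j : Fin n,
      IsAsm (Matrix.of (fun i k : Fin n => A i j (Fin.rev k))) := by
    intro j
    constructor
    · intro i; exact altLine_rev (hA.2.2 i j)
    · intro k; exact hA.1 j k.rev
  have colL : ∀ j i : Fin n,
      Lmat A i j = ∑ k : Fin n, (Matrix.of (fun i k : Fin n => A i j (Fin.rev k))) i k
        * ((n - k.1 : ℕ) : ℤ) := by
    intro j i
    exact (lmat_as_core (Matrix.of (fun i k : Fin n => A i j (Fin.rev k)))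
      (fun i k => A i j k) (fun _ _ => rfl) i).symm
  refine ⟨core_le B hB, core_eq B hB, ?_, ?_, ?_, ?_⟩
  · intro i S
    calc ∑ j ∈ S, Lmat A i j
        = ∑ j ∈ S, ∑ k : Fin n, (Matrix.of (fun j k : Fin n => A i j (Fin.rev k))) j k
            * ((n - k.1 : ℕ) : ℤ) := Finset.sum_congr rfl (fun j _ => rowL i j)
      _ ≤ _ := core_le _ (rowAsm i) S
  · intro i
    calc ∑ j : Fin n, Lmat A i j
        = ∑ j : Fin n, ∑ k : Fin n, (Matrix.of (fun j k : Fin n => A i j (Fin.rev k))) j k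
            * ((n - k.1 : ℕ) : ℤ) := Finset.sum_congr rfl (fun j _ => rowL i j)
      _ = _ := core_eq _ (rowAsm i)
  · intro j S
    calc ∑ i ∈ S, Lmat A i j
        = ∑ i ∈ S, ∑ k : Fin n, (Matrix.of (fun i k : Fin n => A i j (Fin.rev k))) i k
            * ((n - k.1 : ℕ) : ℤ) := Finset.sum_congr rfl (fun i _ => colL j i)
      _ ≤ _ := core_le _ (colAsm j) S
  · intro j
    calc ∑ i : Fin n, Lmat A i j
        = ∑ i : Fin n, ∑ k : Fin n, (Matrix.of (fun i k : Fin n => A i j (Fin.rev k))) i k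
            * ((n - k.1 : ℕ) : ℤ) := Finset.sum_congr rfl (fun i _ => colL j i)
      _ = _ := core_eq _ (colAsm j)
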